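/- arXiv:1609.05784 — 2 statements merged into one kernel-verified Lean document; each statement's English description precedes it below -/
import Mathlib

section
/- Let α ∈ R be irrational, and let X ⊂ T = R/Z be a set such that a finite union of translates of X contains {π(nα) : n ∈ N} (where π : R → T is the canonical projection). Then the closure of X in T has non-empty interior. -/
open Set

set_option maxHeartbeats 1000000 in
theorem stmt6 (α : ℝ) (hα : Irrational α) (X : Set (AddCircle (1 : ℝ)))
    (t : Finset (AddCircle (1 : ℝ)))
    (h : {x : AddCircle (1 : ℝ) | ∃ n : ℕ, x = ((n * α : ℝ) : AddCircle (1 : ℝ))} ⊆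
      ⋃ c ∈ t, (fun x => x + c) '' X) :
    (interior (closure X)).Nonempty := by
  -- Step 1: the subgroup generated by α and 1 is dense in ℝ
  have hG : Dense ((AddSubgroup.closure {α, 1} : AddSubgroup ℝ) : Set ℝ) := by
    rcases AddSubgroup.dense_or_cyclic (AddSubgroup.closure {α, 1}) with hd | ⟨a, ha⟩
    · exact hd
    · exfalso
      have hαm : α ∈ AddSubgroup.closure ({α, 1} : Set ℝ) :=
        AddSubgroup.subset_closure (by simp)
      have h1m : (1 : ℝ) ∈ AddSubgroup.closure ({α, 1} : Set ℝ) :=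
        AddSubgroup.subset_closure (by simp)
      rw [ha, AddSubgroup.mem_closure_singleton] at hαm h1m
      obtain ⟨m, hm⟩ := hαm
      obtain ⟨n, hn⟩ := h1m
      have hn' : (n : ℝ) * a = 1 := by rw [← hn]; simp [zsmul_eq_mul]
      have hn0 : (n : ℝ) ≠ 0 := by
        intro h0; rw [h0, zero_mul] at hn'; exact one_ne_zero hn'.symm
      refine hα ⟨(m : ℚ) / (n : ℚ), ?_⟩
      have hm' : (m : ℝ) * a = α := by rw [← hm]; simp [zsmul_eq_mul]
      have key : (m : ℝ) = α * n := by
        rw [← hm', mul_assoc, mul_comm a (n : ℝ), hn', mul_one]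
      push_cast
      rw [div_eq_iff hn0, key]
  -- Step 2: the ℤ-orbit of π α is dense in the circle
  have hdz : DenseRange (fun z : ℤ => z • ((α : ℝ) : AddCircle (1 : ℝ))) := by
    have hsurj : DenseRange ((↑) : ℝ → AddCircle (1 : ℝ)) :=
      Function.Surjective.denseRange (fun x => QuotientAddGroup.mk_surjective x)
    have himg : Dense (((↑) : ℝ → AddCircle (1 : ℝ)) ''
        ((AddSubgroup.closure {α, 1} : AddSubgroup ℝ) : Set ℝ)) :=
      hsurj.dense_image (AddCircle.continuous_mk' 1) hG
    refine himg.mono ?_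
    rintro _ ⟨x, hx, rfl⟩
    obtain ⟨m, n, rfl⟩ := AddSubgroup.mem_closure_pair.mp hx
    refine ⟨m, ?_⟩
    have h1 : ((1 : ℝ) : AddCircle (1 : ℝ)) = 0 := AddCircle.coe_period 1
    rw [AddCircle.coe_add, AddCircle.coe_zsmul, AddCircle.coe_zsmul, h1, smul_zero, add_zero]
  -- Step 3: convert to the ℕ-orbit
  have hdn : DenseRange (fun n : ℕ => n • ((α : ℝ) : AddCircle (1 : ℝ))) :=
    denseRange_zsmul_iff_nsmul.mp hdz
  have hdense : Dense {x : AddCircle (1 : ℝ) | ∃ n : ℕ, x = ((n * α : ℝ) : AddCircle (1 : ℝ))} := by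
    refine hdn.mono ?_
    rintro _ ⟨n, rfl⟩
    exact ⟨n, by rw [show ((n : ℝ) * α) = n • α by simp [nsmul_eq_mul], AddCircle.coe_nsmul]⟩
  -- Step 4: the finite union of closed translates covers everything
  have hcover : (⋃ c ∈ t, closure ((fun x => x + c) '' X)) = univ := by
    have hclosed : IsClosed (⋃ c ∈ t, closure ((fun x => x + c) '' X)) :=
      t.finite_toSet.isClosed_biUnion fun c _ => isClosed_closure
    have hsub : {x : AddCircle (1 : ℝ) | ∃ n : ℕ, x = ((n * α : ℝ) : AddCircle (1 : ℝ))} ⊆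
        ⋃ c ∈ t, closure ((fun x => x + c) '' X) := by
      intro x hx
      obtain ⟨_, ⟨c, rfl⟩, _, ⟨hc, rfl⟩, hxc⟩ := h hx
      exact mem_biUnion hc (subset_closure hxc)
    have := hdense.mono hsub
    exact hclosed.closure_eq ▸ this.closure_eq
  -- Step 5: Baire category
  obtain ⟨c, hct, hint⟩ : ∃ c ∈ t, (interior (closure ((fun x => x + c) '' X))).Nonempty := by
    by_contra hcon
    push_neg at hcon
    have : ∀ c : t, IsClosed (closure ((fun x => x + (c : AddCircle (1 : ℝ))) '' X)) :=
      fun _ => isClosed_closure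
    obtain ⟨c, hc⟩ := nonempty_interior_of_iUnion_of_closed this (by
      rw [← hcover]
      ext x
      simp [mem_iUnion])
    rw [hcon c c.2] at hc
    exact Set.not_nonempty_empty hc
  -- Step 6: translate back
  have hhomeo : closure ((fun x => x + c) '' X) = (fun x => x + c) '' closure X :=
    ((Homeomorph.addRight c).image_closure X).symm
  have h2 : interior ((fun x => x + c) '' closure X) = (fun x => x + c) '' interior (closure X) :=
    ((Homeomorph.addRight c).image_interior (closure X)).symm
  rw [hhomeo, h2] at hint
  exact hint.of_image
end

section
/- Let α_1, …, α_ℓ ∈ R with ℓ ≥ 2, and suppose dim_Q span_Q(1, α_1, …, α_ℓ) = 2 (i.e., r = 1). Let (x_n)_{n≥0} be an (α_1, …, α_ℓ)-orbit in T = R/Z taking infinitely many values. Then the closure K of {x_n : n ≥ 0} has non-empty interior in T. -/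
set_option maxHeartbeats 1000000


lemma coe_eq_coe_of_int (u u' : ℝ) (m : ℤ) (h : u - u' = m) :
    (u : AddCircle (1:ℝ)) = (u' : AddCircle (1:ℝ)) := by
  have h0 : ((u - u' : ℝ) : AddCircle (1:ℝ)) = 0 := by
    rw [h, AddCircle.coe_eq_zero_iff]
    exact ⟨m, by simp⟩
  have := QuotientAddGroup.mk_sub (AddSubgroup.zmultiples (1:ℝ)) u u'
  rw [show ((u - u' : ℝ) : AddCircle (1:ℝ)) = (u : AddCircle (1:ℝ)) - u' from this] at h0
  linear_combination (norm := abel) h0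

lemma norm_coe_le_abs (u : ℝ) : ‖(u : AddCircle (1:ℝ))‖ ≤ |u| := by
  rw [AddCircle.norm_eq]; simpa using round_le u 0

lemma dense_forward (γ : ℝ) (hγ : Irrational γ) :
    Dense (Set.range fun v : ℕ => ((v * γ : ℝ) : AddCircle (1:ℝ))) := by
  haveI : Fact ((0:ℝ) < 1) := ⟨one_pos⟩
  rw [Metric.dense_iff]
  intro z r hr
  obtain ⟨n, hn⟩ := exists_nat_one_div_lt hr
  -- small positive multiple
  obtain ⟨j, hj1, hjle⟩ := AddCircle.exists_norm_nsmul_le (T := (1:ℝ)) (γ : AddCircle (1:ℝ))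
    (n := n + 1) (Nat.succ_pos n)
  have hjcoe : (j : ℕ) • ((γ : ℝ) : AddCircle (1:ℝ)) = (((j : ℝ) * γ : ℝ) : AddCircle (1:ℝ)) := by
    rw [← AddCircle.coe_nsmul]; norm_num [nsmul_eq_mul]
  set h : ℝ := (j : ℝ) * γ - round ((j : ℝ) * γ) with hh
  have hje : (((j : ℝ) * γ : ℝ) : AddCircle (1:ℝ)) = (h : AddCircle (1:ℝ)) :=
    (coe_eq_coe_of_int h ((j:ℝ)*γ) (-(round ((j:ℝ)*γ))) (by rw [hh]; push_cast; ring)).symm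
  have habs : |h| < r := by
    have h1 : ‖(((j : ℝ) * γ : ℝ) : AddCircle (1:ℝ))‖ = |h| := by
      rw [AddCircle.norm_eq]; norm_num [hh]
    push_cast at hjle
    rw [← h1, ← hjcoe]
    refine lt_of_le_of_lt hjle ?_
    have h2 : (1:ℝ) / ((n:ℝ) + 1 + 1) ≤ 1 / ((n:ℝ)+1) := by
      apply div_le_div_of_nonneg_left one_pos.le
      · positivity
      · linarith
    linarith
  have hj0 : (j : ℝ) ≠ 0 := by
    have := hj1.1; positivity
  have hne : h ≠ 0 := by
    intro h0
    apply hγ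
    refine ⟨(round ((j:ℝ)*γ) : ℚ) / (j : ℚ), ?_⟩
    have : (j : ℝ) * γ = round ((j:ℝ)*γ) := by rw [hh] at h0; linarith
    push_cast
    field_simp
    linarith
  -- lift target
  obtain ⟨t, rfl⟩ := show ∃ t : ℝ, (t : AddCircle (1:ℝ)) = z from Quot.exists_rep z
  -- choose integer shift
  set J : ℤ := if 0 < h then ⌈-t⌉ else ⌊-t⌋ with hJ
  have hs0 : 0 ≤ (t + J) / h := by
    rcases lt_or_gt_of_ne hne with hneg | hpos
    · have hJe : J = ⌊-t⌋ := by rw [hJ, if_neg (not_lt.mpr hneg.le)]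
      have hnum : t + (J:ℝ) ≤ 0 := by
        rw [hJe]; have := Int.floor_le (-t); linarith
      exact div_nonneg_iff.mpr (Or.inr ⟨hnum, hneg.le⟩)
    · have hJe : J = ⌈-t⌉ := by rw [hJ, if_pos hpos]
      apply div_nonneg _ hpos.le
      rw [hJe]; have := Int.le_ceil (-t); linarith
  set m : ℕ := ⌈(t + J) / h⌉₊ with hm
  have hmd : |(m : ℝ) * h - (t + J)| ≤ |h| := by
    have h1 : (t + J) / h ≤ (m : ℝ) := Nat.le_ceil _
    have h2 : (m : ℝ) ≤ (t + J)/h + 1 := by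
      have := Nat.ceil_lt_add_one hs0; exact (le_of_lt (by exact_mod_cast this))
    have hep : (m : ℝ) * h - (t + J) = ((m : ℝ) - (t+J)/h) * h := by
      field_simp
    rw [hep, abs_mul]
    have : |(m:ℝ) - (t+J)/h| ≤ 1 := by rw [abs_le]; constructor <;> linarith
    nlinarith [abs_nonneg h]
  refine ⟨(((m * j : ℕ) : ℝ) * γ : ℝ), Metric.mem_ball.mpr ?_, Set.mem_range_self (m * j)⟩
  have hcoe2 : (((m * j : ℕ) : ℝ) * γ : ℝ) = (m : ℕ) • ((j : ℝ) * γ) := by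
    push_cast; rw [nsmul_eq_mul]; ring
  have hcirc : ((((m * j : ℕ) : ℝ) * γ : ℝ) : AddCircle (1:ℝ)) = (((m : ℝ) * h : ℝ) : AddCircle (1:ℝ)) := by
    rw [hcoe2, AddCircle.coe_nsmul, hje, ← AddCircle.coe_nsmul, nsmul_eq_mul]
  rw [hcirc, dist_eq_norm, ← QuotientAddGroup.mk_sub]
  calc ‖(((m:ℝ) * h - t : ℝ) : AddCircle (1:ℝ))‖
      = ‖(((m:ℝ) * h - (t + J) : ℝ) : AddCircle (1:ℝ))‖ := by
        congr 1
        exact coe_eq_coe_of_int _ _ J (by push_cast; ring)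
    _ ≤ |(m:ℝ) * h - (t + J)| := norm_coe_le_abs _
    _ ≤ |h| := hmd
    _ < r := habs

lemma main_aux (β : ℝ) (hβ : Irrational β) (D : ℕ) (hD : 0 < D) (M : ℕ)
    (x0 : AddCircle (1:ℝ)) (A B : ℕ → ℤ) (K : Set (AddCircle (1:ℝ))) (hKc : IsClosed K)
    (hmem : ∀ n, x0 + ((((A n : ℝ) * β + (B n : ℝ)) / (D:ℝ) : ℝ) : AddCircle (1:ℝ)) ∈ K)
    (hstep : ∀ n, |A (n+1) - A n| ≤ (M:ℤ))
    (hA0 : A 0 = 0)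
    (hunb : ∀ C : ℤ, ∃ n, C < A n) :
    (interior K).Nonempty := by
  haveI : Fact ((0:ℝ) < 1) := ⟨one_pos⟩
  -- crossing lemma
  have hcross : ∀ v : ℕ, ∃ n, (v:ℤ) ≤ A n ∧ A n ≤ (v:ℤ) + M := by
    intro v
    have hex : ∃ n, (v:ℤ) ≤ A n := (hunb v).imp fun n hn => hn.le
    classical
    refine ⟨Nat.find hex, Nat.find_spec hex, ?_⟩
    rcases Nat.eq_zero_or_eq_succ_pred (Nat.find hex) with h0 | hsucc
    · rw [h0, hA0]
      positivity
    · set k := (Nat.find hex) - 1 with hk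
      have hklt : k < Nat.find hex := by omega
      have hnk : ¬ ((v:ℤ) ≤ A k) := Nat.find_min hex hklt
      have hstepk := hstep k
      have hkk : k + 1 = Nat.find hex := by omega
      rw [← hkk]
      have := abs_le.mp hstepk
      omega
  -- the closed pieces
  set F : Fin (M+1) × Fin D → Set (AddCircle (1:ℝ)) := fun kc =>
    (fun z => x0 + ((((kc.1 : ℕ) : ℝ) * β + ((kc.2 : ℕ) : ℝ)) / (D:ℝ) : ℝ) + z) ⁻¹' K with hF
  have hFc : ∀ kc, IsClosed (F kc) := by
    intro kc
    exact hKc.preimage (continuous_const.add continuous_id)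
  have hsub : (Set.range fun v : ℕ => ((v * (β / (D:ℝ)) : ℝ) : AddCircle (1:ℝ))) ⊆ ⋃ kc, F kc := by
    rintro _ ⟨v, rfl⟩
    obtain ⟨n, hv1, hv2⟩ := hcross v
    have hk1 : (A n - v).toNat < M + 1 := by omega
    have hc1 : (B n % D).toNat < D := by
      have := Int.emod_lt_of_pos (B n) (by exact_mod_cast hD : (0:ℤ) < D)
      have := Int.emod_nonneg (B n) (by positivity : (D:ℤ) ≠ 0)
      omega
    refine Set.mem_iUnion.mpr ⟨(⟨(A n - v).toNat, hk1⟩, ⟨(B n % D).toNat, hc1⟩), ?_⟩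
    simp only [hF, Set.mem_preimage]
    have hBnonneg : (0:ℤ) ≤ B n % D := Int.emod_nonneg (B n) (by positivity)
    have hkc : (((A n - v).toNat : ℤ) : ℝ) = (A n : ℝ) - v := by
      have : ((A n - v).toNat : ℤ) = A n - v := Int.toNat_of_nonneg (by omega)
      exact_mod_cast congrArg (Int.cast : ℤ → ℝ) this
    have hcc : (((B n % D).toNat : ℤ) : ℝ) = ((B n % D : ℤ) : ℝ) := by
      exact_mod_cast congrArg (Int.cast : ℤ → ℝ) (Int.toNat_of_nonneg hBnonneg)
    have heq : (((((A n - v).toNat : ℕ) : ℝ) * β + (((B n % D).toNat : ℕ) : ℝ)) / (D:ℝ))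
        + ((v : ℝ) * (β / (D:ℝ))) - (((A n : ℝ) * β + (B n : ℝ)) / (D:ℝ)) = ((-(B n / D) : ℤ) : ℝ) := by
      have hDne : (D:ℝ) ≠ 0 := by positivity
      have hBdec : ((B n : ℝ)) = (D:ℝ) * ((B n / D : ℤ) : ℝ) + ((B n % D : ℤ) : ℝ) := by
        exact_mod_cast congrArg (Int.cast : ℤ → ℝ) (Int.mul_ediv_add_emod (B n) D).symm
      push_cast at hkc hcc ⊢
      rw [hkc, hcc]
      field_simp
      linarith [hBdec]
    have : (((v : ℝ) * (β / (D:ℝ)) : ℝ) : AddCircle (1:ℝ))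
        = ((((((A n : ℝ)) * β + (B n : ℝ)) / (D:ℝ) : ℝ) : AddCircle (1:ℝ)))
          - ((((((A n - v).toNat : ℕ) : ℝ) * β + (((B n % D).toNat : ℕ) : ℝ)) / (D:ℝ) : ℝ) : AddCircle (1:ℝ)) := by
      rw [← QuotientAddGroup.mk_sub]
      apply coe_eq_coe_of_int _ _ (-(B n / D))
      push_cast at heq ⊢
      linarith [heq]
    rw [this]
    convert hmem n using 1
    abel
  -- union is everything
  have hdense : Dense (⋃ kc, F kc) :=
    Dense.mono hsub (dense_forward (β / (D:ℝ)) (hβ.div_natCast hD.ne'))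
  have hclosed : IsClosed (⋃ kc, F kc) := isClosed_iUnion_of_finite hFc
  have huniv : (⋃ kc, F kc) = Set.univ := by
    rw [← hclosed.closure_eq]; exact hdense.closure_eq
  obtain ⟨kc, z, hz⟩ := nonempty_interior_of_iUnion_of_closed hFc huniv
  refine ⟨x0 + ((((kc.1 : ℕ) : ℝ) * β + ((kc.2 : ℕ) : ℝ)) / (D:ℝ) : ℝ) + z, ?_⟩
  have : F kc = (Homeomorph.addLeft (x0 + (((((kc.1 : ℕ) : ℝ)) * β + ((kc.2 : ℕ) : ℝ)) / (D:ℝ) : ℝ) : AddCircle (1:ℝ))) ⁻¹' K := rfl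
  rw [this, ← Homeomorph.preimage_interior] at hz
  exact hz


-- rational times common denominator is an integer (real version)
lemma rat_mul_den (r : ℚ) (D : ℕ) (h : r.den ∣ D) : ∃ z : ℤ, ((r : ℝ) * D = z) := by
  obtain ⟨m, rfl⟩ := h
  refine ⟨r.num * m, ?_⟩
  have hden : ((r.den : ℝ)) ≠ 0 := by positivity
  rw [Rat.cast_def]
  push_cast
  field_simp

lemma stmt11_setup (ℓ : ℕ) (hℓ : 2 ≤ ℓ) (α : Fin ℓ → ℝ)
    (hrank : Module.rank ℚ
      (Submodule.span ℚ (insert (1 : ℝ) (Set.range α)) : Submodule ℚ ℝ) = 2) :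
    ∃ (β : ℝ), Irrational β ∧ ∃ (D : ℕ), 0 < D ∧ ∃ (a b : Fin ℓ → ℤ),
      ∀ i, α i = (((a i : ℝ) * β + (b i : ℝ)) / (D : ℝ)) := by
  set V : Submodule ℚ ℝ := Submodule.span ℚ (insert (1 : ℝ) (Set.range α)) with hV
  -- some α j is irrational
  have hirr : ∃ j, Irrational (α j) := by
    by_contra hcon
    push_neg at hcon
    have hsub : insert (1:ℝ) (Set.range α) ⊆ (Set.range ((↑) : ℚ → ℝ)) := by
      rintro y (rfl | ⟨i, rfl⟩)
      · exact ⟨1, by norm_num⟩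
      · simpa [Irrational] using hcon i
    have hle : V ≤ Submodule.span ℚ {(1:ℝ)} := by
      rw [hV]
      apply Submodule.span_le.mpr
      intro y hy
      obtain ⟨q, rfl⟩ := hsub hy
      rw [SetLike.mem_coe, Submodule.mem_span_singleton]
      exact ⟨q, by rw [Rat.smul_one_eq_cast]⟩
    have h1 : Module.rank ℚ V ≤ Module.rank ℚ (Submodule.span ℚ {(1:ℝ)}) :=
      Submodule.rank_mono hle
    have h2 : Module.rank ℚ (Submodule.span ℚ {(1:ℝ)}) ≤ 1 := by
      simpa using rank_span_le (R := ℚ) ({(1:ℝ)} : Set ℝ)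
    rw [hrank] at h1
    exact absurd (h1.trans h2) (by norm_num)
  obtain ⟨j, hβ⟩ := hirr
  set β := α j with hbdef
  -- span {1, β} = V
  haveI hfd : FiniteDimensional ℚ V := by
    exact Module.rank_lt_aleph0_iff.mp (by rw [hrank]; exact Cardinal.nat_lt_aleph0 2)
  have hfr : Module.finrank ℚ V = 2 := Module.finrank_eq_of_rank_eq hrank
  have hli : LinearIndependent ℚ ![(1:ℝ), β] := by
    rw [linearIndependent_fin2]
    constructor
    · simpa using hβ.ne_int 0
    · intro q hq
      apply hβ
      rw [Matrix.cons_val_one, Matrix.cons_val_zero, Matrix.cons_val_zero] at hq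
      rcases eq_or_ne q 0 with rfl | hq0
      · simp at hq
      · exact ⟨q⁻¹, by rw [Rat.smul_def] at hq; push_cast; field_simp at hq ⊢; linarith⟩
  have hWfr : Module.finrank ℚ (Submodule.span ℚ (Set.range ![(1:ℝ), β])) = 2 := by
    rw [finrank_span_eq_card hli]
    simp
  have hWle : Submodule.span ℚ (Set.range ![(1:ℝ), β]) ≤ V := by
    apply Submodule.span_le.mpr
    rintro y ⟨i, rfl⟩
    fin_cases i
    · exact Submodule.subset_span (Set.mem_insert _ _)
    · exact Submodule.subset_span (Set.mem_insert_of_mem _ ⟨j, rfl⟩)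
  have hWV : Submodule.span ℚ (Set.range ![(1:ℝ), β]) = V :=
    Submodule.eq_of_le_of_finrank_le hWle (by rw [hWfr, hfr])
  have hrange : Set.range ![(1:ℝ), β] = {(1:ℝ), β} := by
    simp [Matrix.range_cons, Matrix.range_empty, Set.pair_comm]
  -- coefficients
  have hcoef : ∀ i, ∃ q p : ℚ, (q : ℝ) + (p : ℝ) * β = α i := by
    intro i
    have hmem : α i ∈ V := Submodule.subset_span (Set.mem_insert_of_mem _ ⟨i, rfl⟩)
    rw [← hWV, hrange, Submodule.mem_span_pair] at hmem
    obtain ⟨q, p, hqp⟩ := hmem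
    exact ⟨q, p, by rw [← hqp, Rat.smul_def, Rat.smul_def]; push_cast; ring⟩
  choose q p hpq using hcoef
  set D : ℕ := ∏ i : Fin ℓ, ((p i).den * (q i).den) with hDdef
  have hD : 0 < D := by
    apply Finset.prod_pos
    intro i _
    exact Nat.mul_pos (p i).pos (q i).pos
  have hdvdp : ∀ i, (p i).den ∣ D := fun i =>
    dvd_trans (Dvd.intro _ rfl) (Finset.dvd_prod_of_mem _ (Finset.mem_univ i))
  have hdvdq : ∀ i, (q i).den ∣ D := fun i =>
    dvd_trans (Dvd.intro_left _ rfl) (Finset.dvd_prod_of_mem _ (Finset.mem_univ i))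
  have ha : ∀ i, ∃ z : ℤ, ((p i : ℝ) * D = z) := fun i => rat_mul_den _ _ (hdvdp i)
  have hb : ∀ i, ∃ z : ℤ, ((q i : ℝ) * D = z) := fun i => rat_mul_den _ _ (hdvdq i)
  choose a ha using ha
  choose b hbb using hb
  refine ⟨β, hβ, D, hD, a, b, fun i => ?_⟩
  have hDne : (D : ℝ) ≠ 0 := by positivity
  rw [← ha i, ← hbb i, ← hpq i]
  field_simp
  ring

theorem stmt11 (ℓ : ℕ) (hℓ : 2 ≤ ℓ) (α : Fin ℓ → ℝ)
    (hrank : Module.rank ℚ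
      (Submodule.span ℚ (insert (1 : ℝ) (Set.range α)) : Submodule ℚ ℝ) = 2)
    (x : ℕ → AddCircle (1 : ℝ))
    (horbit : ∀ n : ℕ, ∃ i : Fin ℓ, x (n + 1) - x n = ((α i : ℝ) : AddCircle (1 : ℝ)))
    (hinf : (Set.range x).Infinite) :
    (interior (closure (Set.range x))).Nonempty := by
  classical
  obtain ⟨β, hβ, D, hD, a, b, hα⟩ := stmt11_setup ℓ hℓ α hrank
  have hDne : (D : ℝ) ≠ 0 := by positivity
  -- choose the steps
  set st : ℕ → Fin ℓ := fun n => (horbit n).choose with hst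
  have hstep' : ∀ n, x (n + 1) = x n + ((α (st n) : ℝ) : AddCircle (1:ℝ)) := by
    intro n
    have := (horbit n).choose_spec
    rw [sub_eq_iff_eq_add] at this
    rw [this]; abel
  set A : ℕ → ℤ := fun n => ∑ k ∈ Finset.range n, a (st k) with hA
  set B : ℕ → ℤ := fun n => ∑ k ∈ Finset.range n, b (st k) with hB
  have hA0 : A 0 = 0 := by simp [hA]
  have hAsucc : ∀ n, A (n+1) = A n + a (st n) := fun n => Finset.sum_range_succ _ n
  have hBsucc : ∀ n, B (n+1) = B n + b (st n) := fun n => Finset.sum_range_succ _ n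
  -- key formula
  have key : ∀ n, x n = x 0 + ((((A n : ℝ) * β + (B n : ℝ)) / (D:ℝ) : ℝ) : AddCircle (1:ℝ)) := by
    intro n
    induction n with
    | zero =>
      rw [hA0]
      have hB0 : B 0 = 0 := by simp [hB]
      rw [hB0]
      norm_num
    | succ n ih =>
      rw [hstep' n, ih, hα (st n), hAsucc n, hBsucc n]
      have : ((((A n : ℝ)) * β + (B n : ℝ)) / (D:ℝ) : ℝ) + (((a (st n) : ℝ) * β + (b (st n) : ℝ)) / (D:ℝ))
          = ((((A n + a (st n) : ℤ) : ℝ) * β + ((B n + b (st n) : ℤ) : ℝ)) / (D:ℝ)) := by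
        push_cast
        field_simp
        ring
      rw [← this, AddCircle.coe_add]
      abel
  -- step bound
  set M : ℕ := Finset.univ.sup (fun i => (a i).natAbs) with hM
  have hstepA : ∀ n, |A (n+1) - A n| ≤ (M:ℤ) := by
    intro n
    rw [hAsucc n, add_sub_cancel_left, Int.abs_eq_natAbs]
    have : (a (st n)).natAbs ≤ M := Finset.le_sup (f := fun i => (a i).natAbs) (Finset.mem_univ (st n))
    exact_mod_cast this
  have hnstepA : ∀ n, |(-A) (n+1) - (-A) n| ≤ (M:ℤ) := by
    intro n
    simp only [Pi.neg_apply]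
    rw [show -A (n+1) - -A n = -(A (n+1) - A n) by ring, abs_neg]
    exact hstepA n
  -- membership in K
  set K : Set (AddCircle (1:ℝ)) := closure (Set.range x) with hK
  have hKc : IsClosed K := isClosed_closure
  have hmem : ∀ n, x 0 + ((((A n : ℝ) * β + (B n : ℝ)) / (D:ℝ) : ℝ) : AddCircle (1:ℝ)) ∈ K := by
    intro n
    rw [← key n]
    exact subset_closure (Set.mem_range_self n)
  -- unboundedness dichotomy
  by_cases h1 : ∀ C : ℤ, ∃ n, C < A n
  · exact main_aux β hβ D hD M (x 0) A B K hKc hmem hstepA hA0 h1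
  by_cases h2 : ∀ C : ℤ, ∃ n, A n < C
  · refine main_aux (-β) hβ.neg D hD M (x 0) (-A) B K hKc ?_ hnstepA (by simp [hA0]) ?_
    · intro n
      have : ((((-A) n : ℤ) : ℝ) * (-β) + (B n : ℝ)) / (D:ℝ) = (((A n : ℝ)) * β + (B n : ℝ)) / (D:ℝ) := by
        simp only [Pi.neg_apply]; push_cast; ring
      rw [this]; exact hmem n
    · intro C
      obtain ⟨n, hn⟩ := h2 (-C)
      exact ⟨n, by simp only [Pi.neg_apply]; omega⟩
  -- bounded case: contradiction with infinitude
  exfalso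
  push_neg at h1 h2
  obtain ⟨C₁, hC₁⟩ := h1
  obtain ⟨C₂, hC₂⟩ := h2
  apply hinf
  have hsub : Set.range x ⊆ (fun pr : ℤ × ℤ =>
      x 0 + ((((pr.1 : ℝ) * β + (pr.2 : ℝ)) / (D:ℝ) : ℝ) : AddCircle (1:ℝ))) ''
      ((Set.Icc C₂ C₁) ×ˢ (Set.Ico 0 (D:ℤ))) := by
    rintro _ ⟨n, rfl⟩
    refine ⟨(A n, B n % D), ⟨⟨hC₂ n, hC₁ n⟩,
      ⟨Int.emod_nonneg _ (by positivity), Int.emod_lt_of_pos _ (by exact_mod_cast hD)⟩⟩, ?_⟩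
    have hcoe : ((((A n : ℝ) * β + ((B n % (D:ℤ) : ℤ) : ℝ)) / (D:ℝ) : ℝ) : AddCircle (1:ℝ))
        = ((((A n : ℝ) * β + ((B n : ℤ) : ℝ)) / (D:ℝ) : ℝ) : AddCircle (1:ℝ)) := by
      apply coe_eq_coe_of_int _ _ (-(B n / D))
      have hBdec : ((B n : ℝ)) = (D:ℝ) * ((B n / D : ℤ) : ℝ) + ((B n % (D:ℤ) : ℤ) : ℝ) := by
        exact_mod_cast congrArg (Int.cast : ℤ → ℝ) (Int.mul_ediv_add_emod (B n) D).symm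
      rw [div_sub_div_same]
      push_cast
      rw [div_eq_iff hDne]
      linarith [hBdec]
    show x 0 + ((((A n : ℝ) * β + ((B n % (D:ℤ) : ℤ) : ℝ)) / (D:ℝ) : ℝ) : AddCircle (1:ℝ)) = x n
    rw [key n, hcoe]
  exact Set.Finite.subset (Set.Finite.image _ (Set.Finite.prod (Set.finite_Icc _ _)
    (Set.finite_Ico _ _))) hsub
end
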